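/- arXiv:2303.05493 — 5 statements merged into one kernel-verified Lean document; each statement's English description precedes it below -/
import Mathlib

section
/- Let A, B, C be commutative rings, i* : A → B and j* : A → C ring homomorphisms with j* surjective, and i_* : B → A an additive map such that ker(j*) = i_*(B) and i*(i_*(b)) = c·b for all b ∈ B, where c is a fixed element of B. Then: (1) there is a well-defined ring homomorphism C → B/(c) sending j*(a) to the class of i*(a); (2) the induced ring homomorphism ζ : A → B ×_{B/(c)} C, a ↦ (i*(a), j*(a)), into the fiber product is surjective, and ker(ζ) = i_*(Ann_B(c)), where Ann_B(c) = {b ∈ B : c·b = 0}. In particular, if c is a non-zero-divisor in B, then ζ is a ring isomorphism. -/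
/-- **Gluing lemma for Chow rings (abstract form).**
Let `A, B, C` be commutative rings, `istar : A → B` and `jstar : A → C` ring homomorphisms
with `jstar` surjective, and `ipush : B → A` an additive map with `ker jstar = ipush(B)` and
`istar (ipush b) = c * b` for a fixed `c : B`.  Then:
(1) there is a well-defined ring homomorphism `C → B/(c)` sending `jstar a` to the class of
`istar a`; (2) the induced map `ζ : A → B ×_{B/(c)} C`, `a ↦ (istar a, jstar a)`, is surjective
onto the fiber product and its kernel is `ipush (Ann_B c)`; in particular if `c` is a
non-zero-divisor then `ζ` is a ring isomorphism (it is also injective). -/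
theorem stmt0 {A B C : Type} [CommRing A] [CommRing B] [CommRing C]
    (istar : A →+* B) (jstar : A →+* C) (hj : Function.Surjective jstar)
    (ipush : B →+ A) (c : B)
    (hker : ∀ a : A, jstar a = 0 ↔ a ∈ Set.range ipush)
    (hself : ∀ b : B, istar (ipush b) = c * b) :
    ∃ φ : C →+* B ⧸ Ideal.span {c},
      (∀ a : A, φ (jstar a) = Ideal.Quotient.mk (Ideal.span {c}) (istar a)) ∧
      (∀ (b : B) (x : C), Ideal.Quotient.mk (Ideal.span {c}) b = φ x →
          ∃ a : A, istar a = b ∧ jstar a = x) ∧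
      ({a : A | istar a = 0 ∧ jstar a = 0} = ipush '' {b : B | c * b = 0}) ∧
      ((∀ b : B, c * b = 0 → b = 0) →
        ∀ a : A, istar a = 0 → jstar a = 0 → a = 0) := by
  set I : Ideal B := Ideal.span {c} with hI
  set mk := Ideal.Quotient.mk I
  have hlift : ∀ a ∈ RingHom.ker jstar, (mk.comp istar) a = 0 := by
    intro a ha
    rw [RingHom.mem_ker] at ha
    obtain ⟨b, hb⟩ := (hker a).mp ha
    simp only [RingHom.comp_apply, ← hb, hself]
    exact Ideal.Quotient.eq_zero_iff_mem.mpr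
      (Ideal.mem_span_singleton.mpr ⟨b, rfl⟩)
  let e : A ⧸ RingHom.ker jstar ≃+* C := RingHom.quotientKerEquivOfSurjective hj
  let φ : C →+* B ⧸ I :=
    (Ideal.Quotient.lift (RingHom.ker jstar) (mk.comp istar) hlift).comp
      (e.symm : C →+* A ⧸ RingHom.ker jstar)
  have hφ : ∀ a : A, φ (jstar a) = mk (istar a) := by
    intro a
    have h1 : e.symm (jstar a) = Ideal.Quotient.mk (RingHom.ker jstar) a := by
      apply e.injective
      rw [e.apply_symm_apply]
      rfl
    simp only [φ, RingHom.comp_apply, RingEquiv.coe_toRingHom, h1]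
    rfl
  refine ⟨φ, hφ, ?_, ?_, ?_⟩
  · intro b x hx
    obtain ⟨a0, ha0⟩ := hj x
    rw [← ha0, hφ] at hx
    have : b - istar a0 ∈ I := by
      rw [← Ideal.Quotient.eq]
      exact hx
    obtain ⟨t, ht⟩ := Ideal.mem_span_singleton.mp this
    refine ⟨a0 + ipush t, ?_, ?_⟩
    · rw [map_add, hself, ← ht]; ring
    · have : jstar (ipush t) = 0 := (hker _).mpr ⟨t, rfl⟩
      rw [map_add, this, add_zero, ha0]
  · ext a
    constructor
    · rintro ⟨hi, hjz⟩
      obtain ⟨b, hb⟩ := (hker a).mp hjz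
      refine ⟨b, ?_, hb⟩
      have := hself b
      rw [hb, hi] at this
      exact this.symm
    · rintro ⟨b, hcb, rfl⟩
      exact ⟨by rw [hself]; exact hcb, (hker _).mpr ⟨b, rfl⟩⟩
  · intro hreg a hi hjz
    obtain ⟨b, hb⟩ := (hker a).mp hjz
    have hcb : c * b = 0 := by rw [← hself, hb, hi]
    rw [← hb, hreg b hcb, map_zero]
end

section
/- In the polynomial ring R = ℤ[1/6][t₁, t₂, s], let σ be the ring automorphism fixing s and exchanging t₁ and t₂, and let R^σ be the subring of σ-invariant elements (equal to ℤ[1/6][t₁+t₂, t₁t₂, s]). Let I be the ideal of R generated by 2s(2s−t₁) and 2s(2s−t₂). Then the intersection I ∩ R^σ is precisely the ideal of R^σ generated by the two elements 2s(4s−(t₁+t₂)) and 2s(2s−t₁)(2s−t₂) = 2s(4s² − 2s(t₁+t₂) + t₁t₂). -/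
open MvPolynomial

theorem key_dvd {A : Type*} [CommRing A] (p : MvPolynomial (Fin 3) A) :
    (X 0 - X 1 : MvPolynomial (Fin 3) A) ∣ p - rename (Equiv.swap (0 : Fin 3) 1) p := by
  induction p using MvPolynomial.induction_on with
  | C a => simp
  | add p q hp hq =>
    obtain ⟨c, hc⟩ := hp; obtain ⟨d, hd⟩ := hq
    exact ⟨c + d, by rw [map_add]; linear_combination hc + hd⟩
  | mul_X p i hp =>
    obtain ⟨c, hc⟩ := hp
    have h2 : (X 0 - X 1 : MvPolynomial (Fin 3) A) ∣
        (X i - X (Equiv.swap (0 : Fin 3) 1 i)) := by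
      fin_cases i
      · simp
      · exact ⟨-1, by norm_num [Equiv.swap_apply_right]⟩
      · simp [Equiv.swap_apply_of_ne_of_ne]
    obtain ⟨d, hd⟩ := h2
    refine ⟨c * X i + rename (Equiv.swap (0 : Fin 3) 1) p * d, ?_⟩
    rw [map_mul, rename_X]
    linear_combination (X i : MvPolynomial (Fin 3) A) * hc
      + (rename (Equiv.swap (0 : Fin 3) 1) p) * hd

instance : IsRightCancelAdd (MvPolynomial (Fin 3) (Localization.Away (6:ℤ))) :=
  ⟨fun a b c h => by simpa [add_assoc] using congrArg (· + (-a)) h⟩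

local notation "RR" => MvPolynomial (Fin 3) (Localization.Away (6:ℤ))

/-- In `R = ℤ[1/6][t₁, t₂, s]` (polynomial ring over the localization of `ℤ` away from `6`),
let `σ` be the ring automorphism fixing `s = X 2` and exchanging `t₁ = X 0` and `t₂ = X 1`.
Let `I` be the ideal generated by `2s(2s−t₁)` and `2s(2s−t₂)`.  Then the two elements
`g₁ = 2s(4s−(t₁+t₂))` and `g₂ = 2s(4s²−2s(t₁+t₂)+t₁t₂)` are `σ`-invariant, and the
intersection `I ∩ R^σ` is precisely the ideal of the invariant subring `R^σ` generated by
`g₁` and `g₂`. -/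
theorem stmt2 :
    letI R16 := Localization.Away (6 : ℤ)
    letI R := MvPolynomial (Fin 3) R16
    letI σ : R ≃ₐ[R16] R := renameEquiv R16 (Equiv.swap (0 : Fin 3) 1)
    letI t₁ : R := X 0
    letI t₂ : R := X 1
    letI s : R := X 2
    letI I : Ideal R := Ideal.span {2 * s * (2 * s - t₁), 2 * s * (2 * s - t₂)}
    letI g₁ : R := 2 * s * (4 * s - (t₁ + t₂))
    letI g₂ : R := 2 * s * (4 * s ^ 2 - 2 * s * (t₁ + t₂) + t₁ * t₂)
    σ g₁ = g₁ ∧ σ g₂ = g₂ ∧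
      ∀ x : R, σ x = x →
        (x ∈ I ↔ ∃ a b : R, σ a = a ∧ σ b = b ∧ x = a * g₁ + b * g₂) := by
  set σ := renameEquiv (Localization.Away (6 : ℤ)) (Equiv.swap (0 : Fin 3) 1) with hσdef
  set t₁ : MvPolynomial (Fin 3) (Localization.Away (6 : ℤ)) := X 0 with ht₁def
  set t₂ : MvPolynomial (Fin 3) (Localization.Away (6 : ℤ)) := X 1 with ht₂def
  set s : MvPolynomial (Fin 3) (Localization.Away (6 : ℤ)) := X 2 with hsdef
  set I := Ideal.span {2 * s * (2 * s - t₁), 2 * s * (2 * s - t₂)} with hIdef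
  set g₁ := 2 * s * (4 * s - (t₁ + t₂)) with hg₁def
  set g₂ := 2 * s * (4 * s ^ 2 - 2 * s * (t₁ + t₂) + t₁ * t₂) with hg₂def
  haveI : IsDomain (Localization.Away (6 : ℤ)) :=
    IsLocalization.isDomain_of_le_nonZeroDivisors (Localization.Away (6 : ℤ))
      (powers_le_nonZeroDivisors_of_noZeroDivisors (by norm_num : (6 : ℤ) ≠ 0))
  -- basic facts about σ
  have hσ : ∀ p : RR, σ p = rename (Equiv.swap (0 : Fin 3) 1) p := fun p => rfl
  have hσt₁ : σ t₁ = t₂ := by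
    show σ (X 0) = X 1; rw [hσ, rename_X, Equiv.swap_apply_left]
  have hσt₂ : σ t₂ = t₁ := by
    show σ (X 1) = X 0; rw [hσ, rename_X, Equiv.swap_apply_right]
  have hσs : σ s = s := by
    show σ (X 2) = X 2
    rw [hσ, rename_X, Equiv.swap_apply_of_ne_of_ne (by decide) (by decide)]
  have hσσ : ∀ p : RR, σ (σ p) = p := fun p => by
    rw [hσ, hσ, rename_rename]
    have : (⇑(Equiv.swap (0 : Fin 3) 1) ∘ ⇑(Equiv.swap (0 : Fin 3) 1)) = id := by
      funext y; simp [Equiv.swap_apply_self]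
    rw [this, rename_id, AlgHom.id_apply]
  have hσC : ∀ a : (Localization.Away (6 : ℤ)), σ (C a) = C a := fun a => by rw [hσ, rename_C]
  -- invariance of g₁ and g₂
  have hg₁ : σ g₁ = g₁ := by
    show σ (2 * s * (4 * s - (t₁ + t₂))) = 2 * s * (4 * s - (t₁ + t₂))
    simp only [map_mul, map_add, map_sub, map_pow, map_ofNat, hσs, hσt₁, hσt₂]
    ring
  have hg₂ : σ g₂ = g₂ := by
    show σ (2 * s * (4 * s ^ 2 - 2 * s * (t₁ + t₂) + t₁ * t₂))
        = 2 * s * (4 * s ^ 2 - 2 * s * (t₁ + t₂) + t₁ * t₂)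
    simp only [map_mul, map_add, map_sub, map_pow, map_ofNat, hσs, hσt₁, hσt₂]
    ring
  refine ⟨hg₁, hg₂, fun x hx => ?_⟩
  -- the inverse of 2
  set k : RR := C ((3 : (Localization.Away (6 : ℤ))) * IsLocalization.Away.invSelf (S := Localization.Away (6 : ℤ)) (6 : ℤ)) with hkdef
  have hk : (2 : RR) * k = 1 := by
    have h6 : algebraMap ℤ (Localization.Away (6 : ℤ)) 6 * IsLocalization.Away.invSelf (S := Localization.Away (6 : ℤ)) (6 : ℤ) = 1 :=
      IsLocalization.Away.mul_invSelf (6 : ℤ)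
    have h6' : (algebraMap ℤ (Localization.Away (6 : ℤ))) 6 = (6 : (Localization.Away (6 : ℤ))) := by
      simp [algebraMap_int_eq]
    rw [h6'] at h6
    have : (2 : (Localization.Away (6 : ℤ))) * ((3 : (Localization.Away (6 : ℤ))) * IsLocalization.Away.invSelf (S := Localization.Away (6 : ℤ)) (6 : ℤ)) = 1 := by
      linear_combination h6
    calc (2 : RR) * k = C ((2 : (Localization.Away (6 : ℤ))) * ((3 : (Localization.Away (6 : ℤ))) * IsLocalization.Away.invSelf (S := Localization.Away (6 : ℤ)) (6 : ℤ))) := by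
          rw [map_mul, map_ofNat]
      _ = 1 := by rw [this, map_one]
  have hσk : σ k = k := hσC _
  constructor
  · -- forward direction
    intro hmem
    obtain ⟨u, v, huv⟩ := Ideal.mem_span_pair.mp hmem
    -- huv : u * (2*s*(2*s-t₁)) + v * (2*s*(2*s-t₂)) = x
    have hσf : σ (u * (2 * s * (2 * s - t₁)) + v * (2 * s * (2 * s - t₂))) = σ x :=
      congrArg σ huv
    rw [hx] at hσf
    simp only [map_mul, map_add, map_sub, map_pow, map_ofNat, hσs, hσt₁, hσt₂] at hσf
    -- hσf : σ u * (2*s*(2*s - t₂)) + σ v * (2*s*(2*s - t₁)) = x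
    set p : RR := k * (u + σ v) with hpdef
    set q : RR := k * (σ u + v) with hqdef
    have hσp : σ p = q := by
      rw [hpdef, hqdef, map_mul, map_add, hσk, hσσ]
    have hσq : σ q = p := by
      rw [hpdef, hqdef, map_mul, map_add, hσk, hσσ]
    obtain ⟨c, hc⟩ := key_dvd (A := (Localization.Away (6 : ℤ))) p
    rw [← hσ, hσp] at hc
    rw [← ht₁def, ← ht₂def] at hc
    -- hc : p - q = (t₁ - t₂) * c
    have ht12 : t₁ - t₂ ≠ 0 := by
      rw [ht₁def, ht₂def, sub_ne_zero]
      exact fun h => absurd (X_injective h) (by decide)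
    have hσc : σ c = c := by
      have h1 : σ (p - q) = σ ((t₁ - t₂) * c) := congrArg σ hc
      simp only [map_mul, map_sub, hσp, hσq, hσt₁, hσt₂] at h1
      have h3 : (t₁ - t₂) * σ c = (t₁ - t₂) * c := by
        linear_combination h1 + hc
      exact mul_left_cancel₀ ht12 h3
    -- assemble the answer
    refine ⟨k * (p + q) - k * c * (4 * s - (t₁ + t₂)), 4 * (k * c), ?_, ?_, ?_⟩
    · simp only [map_mul, map_add, map_sub, map_pow, map_ofNat, hσk, hσp, hσq, hσc,
        hσs, hσt₁, hσt₂]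
      ring
    · simp only [map_mul, map_ofNat, hσk, hσc]
    · -- the identity
      have hA : x = p * (2 * s * (2 * s - t₁)) + q * (2 * s * (2 * s - t₂)) := by
        rw [hpdef, hqdef]
        linear_combination (-k) * huv - k * hσf - x * hk
      have hPK : p - k * (p + q) = (t₁ - t₂) * (k * c) := by
        linear_combination k * hc - p * hk
      have hQK : q - k * (p + q) = -((t₁ - t₂) * (k * c)) := by
        linear_combination (-k) * hc - q * hk
      show x = (k * (p + q) - k * c * (4 * s - (t₁ + t₂))) * g₁ + 4 * (k * c) * g₂
      show x = (k * (p + q) - k * c * (4 * s - (t₁ + t₂))) * (2 * s * (4 * s - (t₁ + t₂)))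
          + 4 * (k * c) * (2 * s * (4 * s ^ 2 - 2 * s * (t₁ + t₂) + t₁ * t₂))
      linear_combination hA + (2 * s * (2 * s - t₁)) * hPK + (2 * s * (2 * s - t₂)) * hQK
  · -- backward direction
    rintro ⟨a, b, -, -, rfl⟩
    have hg1I : g₁ ∈ I := Ideal.mem_span_pair.mpr ⟨1, 1, by show _ = 2 * s * (4 * s - (t₁ + t₂)); ring⟩
    have hg2I : g₂ ∈ I := Ideal.mem_span_pair.mpr
      ⟨2 * s - t₂, 0, by show _ = 2 * s * (4 * s ^ 2 - 2 * s * (t₁ + t₂) + t₁ * t₂); ring⟩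
    exact I.add_mem (I.mul_mem_left a hg1I) (I.mul_mem_left b hg2I)
end

section
/- In the polynomial ring ℤ[1/6][λ₁, λ₂, λ₃], define p₂ = 12λ₁⁴ − 44λ₁²λ₂ + 92λ₁λ₃, p₁ = −14λ₁³λ₂ + 2λ₁²λ₃ + 48λ₁λ₂² − 96λ₂λ₃, p₀ = 15λ₁³λ₃ − 52λ₁λ₂λ₃ + 112λ₃², and z₂ = −1152λ₁³λ₃² + 256λ₁²λ₂²λ₃ + 5824λ₁λ₂λ₃² − 1152λ₂³λ₃ − 10976λ₃³. Then z₂ does not belong to the ideal generated by p₀, p₁, and p₂. -/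
open MvPolynomial
open DualNumber

/-- In the polynomial ring `ℤ[1/6][λ₁, λ₂, λ₃]` (over the localization of `ℤ` away from `6`),
with `λ₁ = X 0`, `λ₂ = X 1`, `λ₃ = X 2`, the element
`z₂ = −1152λ₁³λ₃² + 256λ₁²λ₂²λ₃ + 5824λ₁λ₂λ₃² − 1152λ₂³λ₃ − 10976λ₃³` does not belong to
the ideal generated by
`p₀ = 15λ₁³λ₃ − 52λ₁λ₂λ₃ + 112λ₃²`,
`p₁ = −14λ₁³λ₂ + 2λ₁²λ₃ + 48λ₁λ₂² − 96λ₂λ₃`, and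
`p₂ = 12λ₁⁴ − 44λ₁²λ₂ + 92λ₁λ₃`. -/
theorem stmt11 :
    letI R16 := Localization.Away (6 : ℤ)
    letI R := MvPolynomial (Fin 3) R16
    letI l₁ : R := X 0
    letI l₂ : R := X 1
    letI l₃ : R := X 2
    letI p₂ : R := 12 * l₁ ^ 4 - 44 * l₁ ^ 2 * l₂ + 92 * l₁ * l₃
    letI p₁ : R := -14 * l₁ ^ 3 * l₂ + 2 * l₁ ^ 2 * l₃ + 48 * l₁ * l₂ ^ 2 - 96 * l₂ * l₃
    letI p₀ : R := 15 * l₁ ^ 3 * l₃ - 52 * l₁ * l₂ * l₃ + 112 * l₃ ^ 2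
    letI z₂ : R := -1152 * l₁ ^ 3 * l₃ ^ 2 + 256 * l₁ ^ 2 * l₂ ^ 2 * l₃ +
      5824 * l₁ * l₂ * l₃ ^ 2 - 1152 * l₂ ^ 3 * l₃ - 10976 * l₃ ^ 3
    z₂ ∉ Ideal.span ({p₀, p₁, p₂} : Set R) := by
  intro h
  set f : Localization.Away (6 : ℤ) →+* ℚ :=
    Localization.awayLift (Int.castRingHom ℚ) 6 (by norm_num) with hf
  set φ : MvPolynomial (Fin 3) (Localization.Away (6 : ℤ)) →+* DualNumber ℚ :=
    eval₂Hom ((algebraMap ℚ (DualNumber ℚ)).comp f) ![2 * ε, 1, ε] with hφ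
  have heps : (ε : DualNumber ℚ) * ε = 0 := eps_mul_eps
  have key := Ideal.mem_map_of_mem φ h
  rw [Ideal.map_span] at key
  have hp0 : φ (15 * X 0 ^ 3 * X 2 - 52 * X 0 * X 1 * X 2 + 112 * X 2 ^ 2) = 0 := by
    simp only [hφ, map_add, map_sub, map_mul, map_pow, map_ofNat, eval₂Hom_X',
      Matrix.cons_val_zero, Matrix.cons_val_one, Matrix.head_cons, Matrix.cons_val_two,
      Matrix.tail_cons]
    linear_combination (120*(ε:DualNumber ℚ)^2 + 8) * heps
  have hp1 : φ (-14 * X 0 ^ 3 * X 1 + 2 * X 0 ^ 2 * X 2 + 48 * X 0 * X 1 ^ 2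
      - 96 * X 1 * X 2) = 0 := by
    simp only [hφ, map_add, map_sub, map_mul, map_pow, map_neg, map_ofNat, eval₂Hom_X',
      Matrix.cons_val_zero, Matrix.cons_val_one, Matrix.head_cons, Matrix.cons_val_two,
      Matrix.tail_cons]
    linear_combination (-104*(ε:DualNumber ℚ)) * heps
  have hp2 : φ (12 * X 0 ^ 4 - 44 * X 0 ^ 2 * X 1 + 92 * X 0 * X 2) = 0 := by
    simp only [hφ, map_add, map_sub, map_mul, map_pow, map_ofNat, eval₂Hom_X',
      Matrix.cons_val_zero, Matrix.cons_val_one, Matrix.head_cons, Matrix.cons_val_two,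
      Matrix.tail_cons]
    linear_combination (192*(ε:DualNumber ℚ)^2 + 8) * heps
  have himg : φ '' {(15 * X 0 ^ 3 * X 2 - 52 * X 0 * X 1 * X 2 + 112 * X 2 ^ 2 :
      MvPolynomial (Fin 3) (Localization.Away (6 : ℤ))),
      -14 * X 0 ^ 3 * X 1 + 2 * X 0 ^ 2 * X 2 + 48 * X 0 * X 1 ^ 2 - 96 * X 1 * X 2,
      12 * X 0 ^ 4 - 44 * X 0 ^ 2 * X 1 + 92 * X 0 * X 2} ⊆ {0} := by
    rintro x ⟨y, hy, rfl⟩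
    rcases hy with rfl | rfl | rfl
    · exact hp0
    · exact hp1
    · exact hp2
  have hz : φ (-1152 * X 0 ^ 3 * X 2 ^ 2 + 256 * X 0 ^ 2 * X 1 ^ 2 * X 2 +
      5824 * X 0 * X 1 * X 2 ^ 2 - 1152 * X 1 ^ 3 * X 2 - 10976 * X 2 ^ 3) = 0 := by
    have h0 : Ideal.span ({0} : Set (DualNumber ℚ)) = ⊥ := by simp
    have := Ideal.span_mono himg key
    rw [h0] at this
    exact Ideal.mem_bot.mp this
  apply absurd hz
  simp only [hφ, map_add, map_sub, map_mul, map_pow, map_neg, map_ofNat, eval₂Hom_X',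
    Matrix.cons_val_zero, Matrix.cons_val_one, Matrix.head_cons, Matrix.cons_val_two,
    Matrix.tail_cons]
  intro hc
  have h1152 : (-1152 : DualNumber ℚ) * ε = 0 := by
    linear_combination hc - (-9216*(ε:DualNumber ℚ)^3 + 1696*ε) * heps
  have e1 : (TrivSqZeroExt.inlHom ℚ ℚ) (-1152) = (-1152 : DualNumber ℚ) := by
    rw [map_neg, map_ofNat]
  have h2 : TrivSqZeroExt.inr ((-1152 : ℚ) • (1 : ℚ)) = (TrivSqZeroExt.inr 0 : DualNumber ℚ) := by
    rw [← TrivSqZeroExt.inl_mul_inr]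
    show (TrivSqZeroExt.inlHom ℚ ℚ) (-1152) * ε = _
    rw [e1, h1152, TrivSqZeroExt.inr_zero]
  have h3 := TrivSqZeroExt.inr_injective h2
  norm_num at h3
end

section
/- Let k be a field, and consider the action of GL₃(k) on homogeneous quadratic forms in three variables given by (A·f)(v) = det(A)·f(A⁻¹v). The stabilizer of the quadratic form q(x,y,z) = xy under this action consists exactly of the invertible matrices of the form [[a,0,0],[0,d,0],[e,g,1]] with a, d ∈ kˣ and e, g ∈ k, together with the matrices of the form [[0,b,0],[c,0,0],[e,g,−1]] with b, c ∈ kˣ and e, g ∈ k. -/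
open MvPolynomial

private lemma key12 (k : Type) [Field k] (a b c d e f D : k)
    (h : C D * ((C a * X 0 + C b * X 1 + C c * X 2) * (C d * X 0 + C e * X 1 + C f * X 2))
        = (X 0 * X 1 : MvPolynomial (Fin 3) k)) :
    D * (a * d) = 0 ∧ D * (b * e) = 0 ∧ D * (c * f) = 0 ∧
    D * (a * e + b * d) = 1 ∧ D * (a * f + c * d) = 0 ∧ D * (b * f + c * e) = 0 := by
  have hx : ∀ i j : Fin 3, (X i : MvPolynomial (Fin 3) k) * X j ≠ 0 :=
    fun i j => mul_ne_zero (X_ne_zero _) (X_ne_zero _)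
  have sq : ∀ (p q : k),
      (C D : MvPolynomial (Fin 3) k) * (C p * X 0 * (C q * X 0)) = 0 → D * (p * q) = 0 := by
    intro p q h'
    have h2 : (C (D * (p * q)) : MvPolynomial (Fin 3) k) * (X 0 * X 0) = 0 := by
      rw [C_mul, C_mul]; linear_combination h'
    rcases mul_eq_zero.mp h2 with h' | h'
    · exact C_eq_zero.mp h'
    · exact absurd h' (hx 0 0)
  have h1 := congrArg (aeval ![(X 0 : MvPolynomial (Fin 3) k), 0, 0]) h
  have h2 := congrArg (aeval ![0, (X 0 : MvPolynomial (Fin 3) k), 0]) h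
  have h3 := congrArg (aeval ![0, 0, (X 0 : MvPolynomial (Fin 3) k)]) h
  have h4 := congrArg (aeval ![(X 0 : MvPolynomial (Fin 3) k), X 1, 0]) h
  have h5 := congrArg (aeval ![(X 0 : MvPolynomial (Fin 3) k), 0, X 1]) h
  have h6 := congrArg (aeval ![0, (X 0 : MvPolynomial (Fin 3) k), X 1]) h
  simp only [map_mul, map_add, aeval_C, aeval_X, Matrix.cons_val_zero, Matrix.cons_val_one,
    Matrix.head_cons, Matrix.cons_val_two, Matrix.tail_cons, mul_zero, add_zero, zero_mul,
    zero_add, algebraMap_eq] at h1 h2 h3 h4 h5 h6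
  have e1 : D * (a * d) = 0 := sq a d h1
  have e2 : D * (b * e) = 0 := sq b e h2
  have e3 : D * (c * f) = 0 := sq c f h3
  have z1 : (C D : MvPolynomial (Fin 3) k) * (C a * C d) = 0 := by
    rw [← C_mul, ← C_mul, e1, C_0]
  have z2 : (C D : MvPolynomial (Fin 3) k) * (C b * C e) = 0 := by
    rw [← C_mul, ← C_mul, e2, C_0]
  have z3 : (C D : MvPolynomial (Fin 3) k) * (C c * C f) = 0 := by
    rw [← C_mul, ← C_mul, e3, C_0]
  have e4 : D * (a * e + b * d) = 1 := by
    have h2' : (C (D * (a * e + b * d)) - 1 : MvPolynomial (Fin 3) k) * (X 0 * X 1) = 0 := by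
      rw [C_mul, C_add, C_mul, C_mul]
      linear_combination h4 - X 0 * X 0 * z1 - X 1 * X 1 * z2
    rcases mul_eq_zero.mp h2' with h' | h'
    · have h'' := sub_eq_zero.mp h'
      rw [← C_1] at h''
      exact C_injective _ _ h''
    · exact absurd h' (hx 0 1)
  have e5 : D * (a * f + c * d) = 0 := by
    have h2' : (C (D * (a * f + c * d)) : MvPolynomial (Fin 3) k) * (X 0 * X 1) = 0 := by
      rw [C_mul, C_add, C_mul, C_mul]
      linear_combination h5 - X 0 * X 0 * z1 - X 1 * X 1 * z3
    rcases mul_eq_zero.mp h2' with h' | h'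
    · exact C_eq_zero.mp h'
    · exact absurd h' (hx 0 1)
  have e6 : D * (b * f + c * e) = 0 := by
    have h2' : (C (D * (b * f + c * e)) : MvPolynomial (Fin 3) k) * (X 0 * X 1) = 0 := by
      rw [C_mul, C_add, C_mul, C_mul]
      linear_combination h6 - X 0 * X 0 * z2 - X 1 * X 1 * z3
    rcases mul_eq_zero.mp h2' with h' | h'
    · exact C_eq_zero.mp h'
    · exact absurd h' (hx 0 1)
  exact ⟨e1, e2, e3, e4, e5, e6⟩

/-- Let `k` be a field and let `GL₃(k)` act on homogeneous quadratic forms in three variables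
by `(A·f)(v) = det(A)·f(A⁻¹v)`.  The stabilizer of the quadratic form `q(x,y,z) = xy`
consists exactly of the invertible matrices `[[a,0,0],[0,d,0],[e,g,1]]` with `a, d ∈ kˣ`,
`e, g ∈ k`, together with the matrices `[[0,b,0],[c,0,0],[e,g,−1]]` with `b, c ∈ kˣ`,
`e, g ∈ k`. -/
theorem stmt12 (k : Type) [Field k] (A : GL (Fin 3) k) :
    (C ((A : Matrix (Fin 3) (Fin 3) k).det) *
        aeval (fun i : Fin 3 =>
          ∑ j : Fin 3, C (((A⁻¹ : GL (Fin 3) k) : Matrix (Fin 3) (Fin 3) k) i j) * X j)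
          ((X 0 * X 1 : MvPolynomial (Fin 3) k))
      = (X 0 * X 1 : MvPolynomial (Fin 3) k)) ↔
    ((∃ a d e g : k, a ≠ 0 ∧ d ≠ 0 ∧
        (A : Matrix (Fin 3) (Fin 3) k) = !![a, 0, 0; 0, d, 0; e, g, 1]) ∨
      (∃ b c e g : k, b ≠ 0 ∧ c ≠ 0 ∧
        (A : Matrix (Fin 3) (Fin 3) k) = !![0, b, 0; c, 0, 0; e, g, -1])) := by
  constructor
  · intro h
    set M := (A : Matrix (Fin 3) (Fin 3) k) with hM
    set N := ((A⁻¹ : GL (Fin 3) k) : Matrix (Fin 3) (Fin 3) k) with hN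
    simp only [map_mul, aeval_X, Fin.sum_univ_three] at h
    obtain ⟨e1, e2, e3, e4, e5, e6⟩ :=
      key12 k (N 0 0) (N 0 1) (N 0 2) (N 1 0) (N 1 1) (N 1 2) M.det h
    have hMN : M * N = 1 := by
      rw [hM, hN, ← Units.val_mul, mul_inv_cancel, Units.val_one]
    have hD : M.det ≠ 0 := by
      have := congrArg Matrix.det hMN
      rw [Matrix.det_mul, Matrix.det_one] at this
      exact left_ne_zero_of_mul_eq_one this
    have ent : ∀ i j : Fin 3,
        M i 0 * N 0 j + M i 1 * N 1 j + M i 2 * N 2 j = if i = j then 1 else 0 := by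
      intro i j
      have := congrFun (congrFun hMN i) j
      simpa [Matrix.mul_apply, Fin.sum_univ_three, Matrix.one_apply] using this
    have hdet : M.det * N.det = 1 := by
      rw [← Matrix.det_mul, hMN, Matrix.det_one]
    rw [Matrix.det_fin_three N] at hdet
    have cancel : ∀ x : k, M.det * x = 0 → x = 0 := fun x hx =>
      (mul_eq_zero.mp hx).resolve_left hD
    have e1' := cancel _ e1
    have e2' := cancel _ e2
    have e3' := cancel _ e3
    have e5' := cancel _ e5
    have e6' := cancel _ e6
    have hc0 : N 0 2 = 0 := by
      by_contra hc
      have hf : N 1 2 = 0 := (mul_eq_zero.mp e3').resolve_left hc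
      have h10 : N 1 0 = 0 := by
        have : N 0 2 * N 1 0 = 0 := by linear_combination e5' - N 0 0 * hf
        exact (mul_eq_zero.mp this).resolve_left hc
      have h11 : N 1 1 = 0 := by
        have : N 0 2 * N 1 1 = 0 := by linear_combination e6' - N 0 1 * hf
        exact (mul_eq_zero.mp this).resolve_left hc
      rw [h10, h11] at e4; simp at e4
    have hf0 : N 1 2 = 0 := by
      by_contra hf
      have h00 : N 0 0 = 0 := by
        have : N 0 0 * N 1 2 = 0 := by linear_combination e5' - N 1 0 * hc0
        exact (mul_eq_zero.mp this).resolve_right hf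
      have h01 : N 0 1 = 0 := by
        have : N 0 1 * N 1 2 = 0 := by linear_combination e6' - N 1 1 * hc0
        exact (mul_eq_zero.mp this).resolve_right hf
      rw [h00, h01] at e4; simp at e4
    by_cases ha : N 0 0 = 0
    · -- antidiagonal case
      right
      have e4' : M.det * (N 0 1 * N 1 0) = 1 := by
        linear_combination e4 - M.det * N 1 1 * ha
      have hp : N 0 1 ≠ 0 := fun h0 => by rw [h0] at e4'; simp at e4'
      have hq : N 1 0 ≠ 0 := fun h0 => by rw [h0] at e4'; simp at e4'
      have h11 : N 1 1 = 0 := (mul_eq_zero.mp e2').resolve_left hp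
      rw [hc0, hf0, ha, h11] at hdet
      have hw : N 2 2 = -1 := by linear_combination -(N 2 2) * e4' - hdet
      have m02 : M 0 2 = 0 := by
        have := ent 0 2; rw [hc0, hf0, hw] at this; simpa using this
      have m12 : M 1 2 = 0 := by
        have := ent 1 2; rw [hc0, hf0, hw] at this; simpa using this
      have m22 : M 2 2 = -1 := by
        have := ent 2 2; rw [hc0, hf0, hw] at this; simp at this; linear_combination -this
      have m01 : M 0 1 * N 1 0 = 1 := by
        have := ent 0 0; rw [ha, m02] at this; simpa using this
      have m00 : M 0 0 = 0 := by
        have := ent 0 1; rw [h11, m02] at this; simp at this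
        exact this.resolve_right hp
      have m11 : M 1 1 = 0 := by
        have := ent 1 0; rw [ha, m12] at this; simp at this
        exact this.resolve_right hq
      have m10 : M 1 0 * N 0 1 = 1 := by
        have := ent 1 1; rw [h11, m12] at this; simpa using this
      refine ⟨M 0 1, M 1 0, M 2 0, M 2 1, left_ne_zero_of_mul_eq_one m01,
        left_ne_zero_of_mul_eq_one m10, ?_⟩
      ext i j
      fin_cases i <;> fin_cases j <;>
        simp [m00, m01, m02, m10, m11, m12, m22]
    · -- diagonal case
      left
      have h10 : N 1 0 = 0 := (mul_eq_zero.mp e1').resolve_left ha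
      have e4' : M.det * (N 0 0 * N 1 1) = 1 := by
        linear_combination e4 - M.det * N 0 1 * h10
      have hp : N 0 0 ≠ 0 := ha
      have hq : N 1 1 ≠ 0 := fun h0 => by rw [h0] at e4'; simp at e4'
      have h01 : N 0 1 = 0 := (mul_eq_zero.mp e2').resolve_right hq
      rw [hc0, hf0, h10, h01] at hdet
      have hw : N 2 2 = 1 := by linear_combination hdet - N 2 2 * e4'
      have m02 : M 0 2 = 0 := by
        have := ent 0 2; rw [hc0, hf0, hw] at this; simpa using this
      have m12 : M 1 2 = 0 := by
        have := ent 1 2; rw [hc0, hf0, hw] at this; simpa using this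
      have m22 : M 2 2 = 1 := by
        have := ent 2 2; rw [hc0, hf0, hw] at this; simpa using this
      have m00 : M 0 0 * N 0 0 = 1 := by
        have := ent 0 0; rw [h10, m02] at this; simpa using this
      have m01 : M 0 1 = 0 := by
        have := ent 0 1; rw [h01, m02] at this; simp at this
        exact this.resolve_right hq
      have m10 : M 1 0 = 0 := by
        have := ent 1 0; rw [h10, m12] at this; simp at this
        exact this.resolve_right hp
      have m11 : M 1 1 * N 1 1 = 1 := by
        have := ent 1 1; rw [h01, m12] at this; simpa using this
      refine ⟨M 0 0, M 1 1, M 2 0, M 2 1, left_ne_zero_of_mul_eq_one m00,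
        left_ne_zero_of_mul_eq_one m11, ?_⟩
      ext i j
      fin_cases i <;> fin_cases j <;>
        simp [m00, m01, m02, m10, m11, m12, m22]
  · rintro (⟨a, d, e, g, ha, hd, hA⟩ | ⟨b, c, e, g, hb, hc, hA⟩)
    · have hNval : ((A⁻¹ : GL (Fin 3) k) : Matrix (Fin 3) (Fin 3) k)
          = !![a⁻¹, 0, 0; 0, d⁻¹, 0; -e * a⁻¹, -g * d⁻¹, 1] := by
        rw [Matrix.coe_units_inv, hA]
        apply Matrix.inv_eq_right_inv
        ext i j
        fin_cases i <;> fin_cases j <;>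
          simp [Matrix.mul_apply, Fin.sum_univ_three] <;> field_simp
      rw [hNval, hA]
      simp only [map_mul, aeval_X, Fin.sum_univ_three, Matrix.det_fin_three]
      simp [Matrix.cons_val_zero, Matrix.cons_val_one, Matrix.head_cons]
      have h2 : (C a * C d * (C a⁻¹ * X 0 * (C d⁻¹ * X 1)) : MvPolynomial (Fin 3) k)
          = C (a * a⁻¹ * (d * d⁻¹)) * (X 0 * X 1) := by
        rw [C_mul, C_mul, C_mul]; ring
      rw [h2, mul_inv_cancel₀ ha, mul_inv_cancel₀ hd, mul_one, C_1, one_mul]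
    · have hNval : ((A⁻¹ : GL (Fin 3) k) : Matrix (Fin 3) (Fin 3) k)
          = !![0, c⁻¹, 0; b⁻¹, 0, 0; g * b⁻¹, e * c⁻¹, -1] := by
        rw [Matrix.coe_units_inv, hA]
        apply Matrix.inv_eq_right_inv
        ext i j
        fin_cases i <;> fin_cases j <;>
          simp [Matrix.mul_apply, Fin.sum_univ_three] <;> field_simp
      rw [hNval, hA]
      simp only [map_mul, aeval_X, Fin.sum_univ_three, Matrix.det_fin_three]
      simp [Matrix.cons_val_zero, Matrix.cons_val_one, Matrix.head_cons]
      have h2 : (C b * C c * (C c⁻¹ * X 1 * (C b⁻¹ * X 0)) : MvPolynomial (Fin 3) k)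
          = C (b * b⁻¹ * (c * c⁻¹)) * (X 0 * X 1) := by
        rw [C_mul, C_mul, C_mul]; ring
      rw [h2, mul_inv_cancel₀ hb, mul_inv_cancel₀ hc, mul_one, C_1, one_mul]
end

section
/- Let R₀ be a commutative ring and A, B, C commutative R₀-algebras with ring homomorphisms i* : A → B and j* : A → C of R₀-algebras, j* surjective, and an additive map i_* : B → A satisfying the projection formula i_*(i*(a)·b) = a·i_*(b), with ker(j*) = i_*(B), and such that c ∈ B is a non-zero-divisor with i*(i_*(b)) = c·b for all b ∈ B. Let P = R₀[X₁,…,X_r, Z] and Q = R₀[Y₁,…,Y_s] be polynomial rings, and suppose given R₀-algebra homomorphisms η : P → A, η_Z : P → Q, and a : Q → B such that: η(Z) = i_*(1); a ∘ η_Z = i* ∘ η; a is surjective with ker(a) generated by q'₁,…,q'_m; η_Z is surjective with ker(η_Z) generated by v₁,…,v_l; the composite of η with j*, restricted to R₀[X₁,…,X_r], is surjective onto C with kernel generated by p₁,…,p_n ∈ R₀[X₁,…,X_r]. Suppose moreover that γ ∈ Q satisfies a(γ) = c, that g'₁,…,g'_n ∈ Q satisfy η_Z(p_h) + g'_h·γ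 ∈ (q'₁,…,q'_m) for each h, and that q_h, g_h ∈ P satisfy η_Z(q_h) = q'_h and η_Z(g_h) = g'_h. Then ker(η) is the ideal of P generated by the elements Z·q₁, …, Z·q_m, Z·v₁, …, Z·v_l, and p₁ + Z·g₁, …, p_n + Z·g_n. -/
open MvPolynomial

lemma stmt14_decomp {R₀ : Type} [CommRing R₀] {r : ℕ}
    (f : MvPolynomial (Option (Fin r)) R₀) :
    ∃ w, f = rename Option.some
        (aeval (fun o : Option (Fin r) => o.elim 0 X) f) + X none * w := by
  induction f using MvPolynomial.induction_on with
  | C t => exact ⟨0, by simp⟩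
  | add f g hf hg =>
      obtain ⟨w1, h1⟩ := hf; obtain ⟨w2, h2⟩ := hg
      refine ⟨w1 + w2, ?_⟩
      rw [map_add, map_add]
      conv_lhs => rw [h1, h2]
      ring
  | mul_X f i hf =>
      obtain ⟨w, hw⟩ := hf
      cases i with
      | none =>
          refine ⟨f, ?_⟩
          rw [map_mul, aeval_X]
          simp [mul_comm]
      | some j =>
          refine ⟨w * X (some j), ?_⟩
          rw [map_mul, aeval_X]
          have he : ((some j : Option (Fin r)).elim 0 X : MvPolynomial (Fin r) R₀) = X j := rfl
          rw [he, map_mul, rename_X]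
          conv_lhs => rw [hw]
          ring


/-- **Description of the kernel in the gluing procedure (abstract form).**
With `A, B, C` commutative `R₀`-algebras playing the roles of the Chow rings of the total
stack, the closed stratum and the open complement, `ipush` the pushforward, `c` the top Chern
class of the normal bundle (a non-zero-divisor), `P = R₀[X₁,…,X_r,Z]`, `Q = R₀[Y₁,…,Y_s]`,
`η : P → A` with `η Z = ipush 1`, `ηZ : P → Q` a surjective lifting of `istar ∘ η` along the
surjection `a : Q → B`, with `ker a` generated by the `q' h`, `ker ηZ` generated by the
`v h`, and the kernel of the restriction of `jstar ∘ η` to `R₀[X₁,…,X_r]` generated by the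
`p h`; if `γ ∈ Q` satisfies `a γ = c`, the `g' h ∈ Q` satisfy
`ηZ (p h) + g' h * γ ∈ (q'₁,…,q'_m)`, and `q h, g h ∈ P` are liftings of `q' h, g' h` along
`ηZ`, then `ker η` is generated by the elements `Z * q h`, `Z * v h` and `p h + Z * g h`. -/
theorem stmt14 (R₀ A B C : Type) [CommRing R₀] [CommRing A] [CommRing B] [CommRing C]
    [Algebra R₀ A] [Algebra R₀ B] [Algebra R₀ C]
    (istar : A →ₐ[R₀] B) (jstar : A →ₐ[R₀] C) (hj : Function.Surjective jstar)
    (ipush : B →+ A)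
    (hproj : ∀ (a : A) (b : B), ipush (istar a * b) = a * ipush b)
    (hker : ∀ a : A, jstar a = 0 ↔ a ∈ Set.range ipush)
    (c : B)
    (hself : ∀ b : B, istar (ipush b) = c * b)
    (hreg : ∀ b : B, c * b = 0 → b = 0)
    (r s l m n : ℕ)
    (η : MvPolynomial (Option (Fin r)) R₀ →ₐ[R₀] A)
    (hZ : η (X none) = ipush 1)
    (ηZ : MvPolynomial (Option (Fin r)) R₀ →ₐ[R₀] MvPolynomial (Fin s) R₀)
    (a : MvPolynomial (Fin s) R₀ →ₐ[R₀] B)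
    (hcomm : ∀ x : MvPolynomial (Option (Fin r)) R₀, a (ηZ x) = istar (η x))
    (hasurj : Function.Surjective a)
    (q' : Fin m → MvPolynomial (Fin s) R₀)
    (hkera : RingHom.ker a = Ideal.span (Set.range q'))
    (hηZsurj : Function.Surjective ηZ)
    (v : Fin l → MvPolynomial (Option (Fin r)) R₀)
    (hkerηZ : RingHom.ker ηZ = Ideal.span (Set.range v))
    (p : Fin n → MvPolynomial (Fin r) R₀)
    (hCsurj : Function.Surjective
      ((jstar.comp η).comp (rename (Option.some : Fin r → Option (Fin r)))))
    (hkerC : RingHom.ker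
        ((jstar.comp η).comp (rename (Option.some : Fin r → Option (Fin r))))
      = Ideal.span (Set.range p))
    (γ : MvPolynomial (Fin s) R₀) (hγ : a γ = c)
    (g' : Fin n → MvPolynomial (Fin s) R₀)
    (hg' : ∀ h : Fin n,
      ηZ (rename Option.some (p h)) + g' h * γ ∈ Ideal.span (Set.range q'))
    (q : Fin m → MvPolynomial (Option (Fin r)) R₀) (hq : ∀ h, ηZ (q h) = q' h)
    (g : Fin n → MvPolynomial (Option (Fin r)) R₀) (hg : ∀ h, ηZ (g h) = g' h) :
    RingHom.ker η = Ideal.span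
      ((Set.range fun h : Fin m => X none * q h) ∪
        (Set.range fun h : Fin l => X none * v h) ∪
        (Set.range fun h : Fin n => rename Option.some (p h) + X none * g h)) := by
  classical
  have hinj : ∀ b : B, ipush b = 0 → b = 0 := by
    intro b hb
    apply hreg
    rw [← hself, hb, map_zero]
  have hmulZ : ∀ x : MvPolynomial (Option (Fin r)) R₀,
      η (X none * x) = ipush (istar (η x)) := by
    intro x
    have h1 := hproj (η x) 1
    rw [mul_one] at h1
    rw [map_mul, hZ, mul_comm, ← h1]
  have hq0 : ∀ h : Fin m, η (X none * q h) = 0 := by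
    intro h
    have h1 : a (q' h) = 0 := by
      have h2 : q' h ∈ RingHom.ker a := by
        rw [hkera]; exact Ideal.subset_span ⟨h, rfl⟩
      rwa [RingHom.mem_ker] at h2
    rw [hmulZ, ← hcomm, hq, h1, map_zero]
  have hv0 : ∀ h : Fin l, η (X none * v h) = 0 := by
    intro h
    have h1 : ηZ (v h) = 0 := by
      have h2 : v h ∈ RingHom.ker ηZ := by
        rw [hkerηZ]; exact Ideal.subset_span ⟨h, rfl⟩
      rwa [RingHom.mem_ker] at h2
    rw [hmulZ, ← hcomm, h1, map_zero, map_zero]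
  have hjZ : ∀ x, jstar (η (X none * x)) = 0 := by
    intro x
    rw [hmulZ]
    exact (hker _).2 ⟨_, rfl⟩
  have hjp : ∀ h : Fin n, jstar (η (rename Option.some (p h))) = 0 := by
    intro h
    have h1 : p h ∈ RingHom.ker
        ((jstar.comp η).comp (rename (Option.some : Fin r → Option (Fin r)))) := by
      rw [hkerC]; exact Ideal.subset_span ⟨h, rfl⟩
    rwa [RingHom.mem_ker, AlgHom.comp_apply, AlgHom.comp_apply] at h1
  have hp0 : ∀ h : Fin n, η (rename Option.some (p h) + X none * g h) = 0 := by
    intro h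
    have hjx : jstar (η (rename Option.some (p h) + X none * g h)) = 0 := by
      rw [map_add, map_add, hjp, hjZ, add_zero]
    obtain ⟨b, hb⟩ := (hker _).1 hjx
    have hix : istar (η (rename Option.some (p h) + X none * g h)) = 0 := by
      have h2 : istar (η (X none * g h)) = a (g' h * γ) := by
        rw [hmulZ, hself, ← hcomm, hg, map_mul, hγ, mul_comm]
      have h3 : a (ηZ (rename Option.some (p h)) + g' h * γ) = 0 := by
        have h4 : ηZ (rename Option.some (p h)) + g' h * γ ∈ RingHom.ker a := by
          rw [hkera]; exact hg' h
        rwa [RingHom.mem_ker] at h4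
      rw [map_add, map_add, ← hcomm, h2, ← map_add, h3]
    rw [← hb, hself] at hix
    rw [← hb, hreg b hix, map_zero]
  apply le_antisymm
  · -- ker ≤ span
    intro f hf
    rw [RingHom.mem_ker] at hf
    obtain ⟨w, hw⟩ := stmt14_decomp f
    have hφ : aeval (fun o : Option (Fin r) => o.elim 0 X) f ∈ RingHom.ker
        ((jstar.comp η).comp (rename (Option.some : Fin r → Option (Fin r)))) := by
      rw [RingHom.mem_ker, AlgHom.comp_apply, AlgHom.comp_apply]
      have h1 : rename Option.some ((aeval (fun o : Option (Fin r) => o.elim 0 X)) f)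
          = f - X none * w := by
        conv_rhs => rw [hw]
        ring
      rw [h1, map_sub, map_sub, hf, hjZ, sub_zero, map_zero]
    rw [hkerC, Ideal.mem_span_range_iff_exists_fun] at hφ
    obtain ⟨α, hα⟩ := hφ
    have key : f = (∑ h, rename Option.some (α h) *
          (rename Option.some (p h) + X none * g h))
        + X none * (w - ∑ h, rename Option.some (α h) * g h) := by
      have h2 : rename Option.some ((aeval (fun o : Option (Fin r) => o.elim 0 X)) f)
          = ∑ h, rename Option.some (α h) * rename Option.some (p h) := by
        rw [← hα, map_sum]
        exact Finset.sum_congr rfl fun h _ => map_mul _ _ _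
      have h3 : (∑ h, rename Option.some (α h) *
            (rename Option.some (p h) + X none * g h))
          = (∑ h, rename Option.some (α h) * rename Option.some (p h))
            + X none * ∑ h, rename Option.some (α h) * g h := by
        rw [Finset.mul_sum, ← Finset.sum_add_distrib]
        exact Finset.sum_congr rfl fun h _ => by ring
      rw [h3, ← h2]
      conv_lhs => rw [hw]
      ring
    have hfw' : η (X none * (w - ∑ h, rename Option.some (α h) * g h)) = 0 := by
      have h4 : η (∑ h, rename Option.some (α h) *
          (rename Option.some (p h) + X none * g h)) = 0 := by
        rw [map_sum]
        refine Finset.sum_eq_zero fun h _ => ?_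
        rw [map_mul, hp0, mul_zero]
      rw [key, map_add, h4, zero_add] at hf
      exact hf
    have h5 : a (ηZ (w - ∑ h, rename Option.some (α h) * g h)) = 0 := by
      rw [hmulZ] at hfw'
      rw [hcomm]
      exact hinj _ hfw'
    have h7 : ηZ (w - ∑ h, rename Option.some (α h) * g h) ∈ RingHom.ker a :=
      RingHom.mem_ker.mpr h5
    rw [hkera, Ideal.mem_span_range_iff_exists_fun] at h7
    obtain ⟨β, hβ⟩ := h7
    choose βl hβl using fun h => hηZsurj (β h)
    have h9 : (w - ∑ h, rename Option.some (α h) * g h) - ∑ h, βl h * q h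
        ∈ RingHom.ker ηZ := by
      rw [RingHom.mem_ker, map_sub, map_sum]
      simp only [map_mul, hβl, hq]
      rw [hβ, sub_self]
    rw [hkerηZ, Ideal.mem_span_range_iff_exists_fun] at h9
    obtain ⟨δ, hδ⟩ := h9
    rw [key]
    apply Ideal.add_mem
    · exact Ideal.sum_mem _ fun h _ => Ideal.mul_mem_left _ _
        (Ideal.subset_span (Or.inr ⟨h, rfl⟩))
    · have h10 : X none * (w - ∑ h, rename Option.some (α h) * g h)
          = (∑ h, βl h * (X none * q h)) + ∑ h, δ h * (X none * v h) := by
        have h11 : (w - ∑ h, rename Option.some (α h) * g h)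
            = (∑ h, βl h * q h) + ∑ h, δ h * v h := by
          rw [hδ]; ring
        rw [h11, mul_add, Finset.mul_sum, Finset.mul_sum]
        congr 1
        · exact Finset.sum_congr rfl fun h _ => by ring
        · exact Finset.sum_congr rfl fun h _ => by ring
      rw [h10]
      apply Ideal.add_mem
      · exact Ideal.sum_mem _ fun h _ => Ideal.mul_mem_left _ _
          (Ideal.subset_span (Or.inl (Or.inl ⟨h, rfl⟩)))
      · exact Ideal.sum_mem _ fun h _ => Ideal.mul_mem_left _ _
          (Ideal.subset_span (Or.inl (Or.inr ⟨h, rfl⟩)))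
  · rw [Ideal.span_le]
    rintro x ((⟨h, rfl⟩ | ⟨h, rfl⟩) | ⟨h, rfl⟩)
    · simpa only [SetLike.mem_coe, RingHom.mem_ker] using hq0 h
    · simpa only [SetLike.mem_coe, RingHom.mem_ker] using hv0 h
    · simpa only [SetLike.mem_coe, RingHom.mem_ker] using hp0 h
end
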